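/- arXiv:1811.10743 — 4 statements merged into one kernel-verified Lean document; each statement's English description precedes it below -/
import Mathlib

section
/- Let q, κ ∈ ℂ and let (x,y) ∈ ℂ² satisfy the Hesse cubic equation x³ + 1 + y³ + q·x·y = 0 together with 3y + 3 − q·x ≠ 0. Define U = −(κ²/3)·(108x + q³x + 9q²y + 9q²) / (4^{1/3}·(3y + 3 − q·x)) and V = −4(q³ + 27)·κ³·(3y² − q·x·y + q·x − 3) / (3y + 3 − q·x)². Then V² = 4U³ − g₂·U − g₃, where g₂ = (κ⁴·4^{1/3}/3)·(q⁴ − 216q) and g₃ = κ⁶·(−(2/27)q⁶ − 40q³ + 432). -/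
/-- If `(x, y)` lies on the Hesse cubic `x³ + 1 + y³ + q·x·y = 0` and
`3y + 3 − qx ≠ 0`, then the inverse uniformization map `(x, y) ↦ (U, V)` lands on the
Weierstrass normal form `V² = 4U³ − g₂U − g₃`.  Here `4^(1/3)` is the real cube root of `4`. -/
theorem stmt_0 (q κ x y : ℂ)
    (hcurve : x ^ 3 + 1 + y ^ 3 + q * x * y = 0)
    (hden : 3 * y + 3 - q * x ≠ 0) :
    let c : ℂ := ((4 : ℝ) ^ ((1 : ℝ) / 3) : ℝ)
    let U : ℂ := -(κ ^ 2 / 3) * (108 * x + q ^ 3 * x + 9 * q ^ 2 * y + 9 * q ^ 2) /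
      (c * (3 * y + 3 - q * x))
    let V : ℂ := -4 * (q ^ 3 + 27) * κ ^ 3 * (3 * y ^ 2 - q * x * y + q * x - 3) /
      (3 * y + 3 - q * x) ^ 2
    let g₂ : ℂ := κ ^ 4 * c / 3 * (q ^ 4 - 216 * q)
    let g₃ : ℂ := κ ^ 6 * (-(2 / 27) * q ^ 6 - 40 * q ^ 3 + 432)
    V ^ 2 = 4 * U ^ 3 - g₂ * U - g₃ := by
  intro c U V g₂ g₃
  have hcpos : (0:ℝ) < (4 : ℝ) ^ ((1 : ℝ) / 3) := Real.rpow_pos_of_pos (by norm_num) _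
  have hc0 : c ≠ 0 := by
    simp only [c, ne_eq, Complex.ofReal_eq_zero]; exact ne_of_gt hcpos
  have hc : c ^ 3 = 4 := by
    have : ((4 : ℝ) ^ ((1 : ℝ) / 3)) ^ (3:ℕ) = 4 := by
      rw [← Real.rpow_natCast _ 3, ← Real.rpow_mul (by norm_num)]; norm_num
    simp only [c, ← Complex.ofReal_pow, this]; norm_num
  have e2 : U ^ 3 = (-(κ ^ 2 / 3) * (108 * x + q ^ 3 * x + 9 * q ^ 2 * y + 9 * q ^ 2)) ^ 3 /
      (4 * (3 * y + 3 - q * x) ^ 3) := by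
    simp only [U]
    rw [div_pow, div_eq_div_iff (pow_ne_zero _ (mul_ne_zero hc0 hden))
      (mul_ne_zero (by norm_num : (4:ℂ) ≠ 0) (pow_ne_zero _ hden))]
    linear_combination (-(-(κ ^ 2 / 3) * (108 * x + q ^ 3 * x + 9 * q ^ 2 * y + 9 * q ^ 2)) ^ 3 *
      (3 * y + 3 - q * x) ^ 3) * hc
  have e3 : g₂ * U = -(κ ^ 6 / 9) * (q ^ 4 - 216 * q) *
      (108 * x + q ^ 3 * x + 9 * q ^ 2 * y + 9 * q ^ 2) / (3 * y + 3 - q * x) := by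
    simp only [g₂, U]
    field_simp
    ring
  rw [e2, e3]
  simp only [V, g₃]
  have hY : (3:ℂ) ^ 3 * (4 * (3 * y + 3 - q * x) ^ 3) * (9 * (3 * y + 3 - q * x)) ≠ 0 :=
    mul_ne_zero (mul_ne_zero (by norm_num) (mul_ne_zero (by norm_num) (pow_ne_zero _ hden)))
      (mul_ne_zero (by norm_num) hden)
  have hden' : 3 * (y + 1) - q * x ≠ 0 := by rw [mul_add, mul_one]; exact hden
  field_simp
  refine mul_left_cancel₀ (mul_ne_zero (by norm_num : (4:ℂ) ≠ 0) (pow_ne_zero 4 hden')) ?_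
  linear_combination (297538935552 * κ ^ 6 + 1487694677760 * κ ^ 6 * y + 2975389355520 * κ ^ 6 * y ^ 2 + 2975389355520 * κ ^ 6 * y ^ 3 + 1487694677760 * κ ^ 6 * y ^ 4 + 297538935552 * κ ^ 6 * y ^ 5 + (-495898225920) * q * κ ^ 6 * x + (-1983592903680) * q * κ ^ 6 * x * y + (-2975389355520) * q * κ ^ 6 * x * y ^ 2 + (-1983592903680) * q * κ ^ 6 * x * y ^ 3 + (-495898225920) * q * κ ^ 6 * x * y ^ 4 + 330598817280 * q ^ 2 * κ ^ 6 * x ^ 2 + 991796451840 * q ^ 2 * κ ^ 6 * x ^ 2 * y + 991796451840 * q ^ 2 * κ ^ 6 * x ^ 2 * y ^ 2 + 330598817280 * q ^ 2 * κ ^ 6 * x ^ 2 * y ^ 3 + 22039921152 * q ^ 3 * κ ^ 6 + 110199605760 * q ^ 3 * κ ^ 6 * y + 220399211520 * q ^ 3 * κ ^ 6 * y ^ 2 + 220399211520 * q ^ 3 * κ ^ 6 * y ^ 3 + 110199605760 * q ^ 3 * κ ^ 6 * y ^ 4 + 22039921152 * q ^ 3 * κ ^ 6 * y ^ 5 + (-110199605760)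 * q ^ 3 * κ ^ 6 * x ^ 3 + (-220399211520) * q ^ 3 * κ ^ 6 * x ^ 3 * y + (-110199605760) * q ^ 3 * κ ^ 6 * x ^ 3 * y ^ 2 + (-36733201920) * q ^ 4 * κ ^ 6 * x + (-146932807680) * q ^ 4 * κ ^ 6 * x * y + (-220399211520) * q ^ 4 * κ ^ 6 * x * y ^ 2 + (-146932807680) * q ^ 4 * κ ^ 6 * x * y ^ 3 + (-36733201920) * q ^ 4 * κ ^ 6 * x * y ^ 4 + 18366600960 * q ^ 4 * κ ^ 6 * x ^ 4 + 18366600960 * q ^ 4 * κ ^ 6 * x ^ 4 * y + 24488801280 * q ^ 5 * κ ^ 6 * x ^ 2 + 73466403840 * q ^ 5 * κ ^ 6 * x ^ 2 * y + 73466403840 * q ^ 5 * κ ^ 6 * x ^ 2 * y ^ 2 + 24488801280 * q ^ 5 * κ ^ 6 * x ^ 2 * y ^ 3 + (-1224440064) * q ^ 5 * κ ^ 6 * x ^ 5 + 408146688 * q ^ 6 * κ ^ 6 + 2040733440 * q ^ 6 * κ ^ 6 * y + 4081466880 * q ^ 6 * κ ^ 6 * y ^ 2 + 4081466880 * q ^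 6 * κ ^ 6 * y ^ 3 + 2040733440 * q ^ 6 * κ ^ 6 * y ^ 4 + 408146688 * q ^ 6 * κ ^ 6 * y ^ 5 + (-8162933760) * q ^ 6 * κ ^ 6 * x ^ 3 + (-16325867520) * q ^ 6 * κ ^ 6 * x ^ 3 * y + (-8162933760) * q ^ 6 * κ ^ 6 * x ^ 3 * y ^ 2 + (-680244480) * q ^ 7 * κ ^ 6 * x + (-2720977920) * q ^ 7 * κ ^ 6 * x * y + (-4081466880) * q ^ 7 * κ ^ 6 * x * y ^ 2 + (-2720977920) * q ^ 7 * κ ^ 6 * x * y ^ 3 + (-680244480) * q ^ 7 * κ ^ 6 * x * y ^ 4 + 1360488960 * q ^ 7 * κ ^ 6 * x ^ 4 + 1360488960 * q ^ 7 * κ ^ 6 * x ^ 4 * y + 453496320 * q ^ 8 * κ ^ 6 * x ^ 2 + 1360488960 * q ^ 8 * κ ^ 6 * x ^ 2 * y + 1360488960 * q ^ 8 * κ ^ 6 * x ^ 2 * y ^ 2 + 453496320 * q ^ 8 * κ ^ 6 * x ^ 2 * y ^ 3 + (-90699264) * q ^ 8 * κ ^ 6 * x ^ 5 + (-151165440)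 * q ^ 9 * κ ^ 6 * x ^ 3 + (-302330880) * q ^ 9 * κ ^ 6 * x ^ 3 * y + (-151165440) * q ^ 9 * κ ^ 6 * x ^ 3 * y ^ 2 + 25194240 * q ^ 10 * κ ^ 6 * x ^ 4 + 25194240 * q ^ 10 * κ ^ 6 * x ^ 4 * y + (-1679616) * q ^ 11 * κ ^ 6 * x ^ 5) * hcurve
end

section
/- Let q ∈ ℂ with 27 + q³ ≠ 0, and set g₂ = (4^{1/3}/3)·(q⁴ − 216q) and g₃ = −(2/27)q⁶ − 40q³ + 432 (i.e. κ = 1). Consider the Weierstrass curve W over ℂ given by y² = x³ + a₄x + a₆ with a₁ = a₂ = a₃ = 0, a₄ = −g₂/4, a₆ = −g₃/4. Then the discriminant Δ of W is nonzero, so W is an elliptic curve, and its j-invariant equals −q³·(q³ − 216)³ / (27 + q³)³. -/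
/-- For `q ∈ ℂ` with `27 + q³ ≠ 0`, and `g₂ = (4^(1/3)/3)(q⁴ − 216q)`,
`g₃ = −(2/27)q⁶ − 40q³ + 432` (i.e. `κ = 1`), the Weierstrass curve
`y² = x³ − (g₂/4)x − (g₃/4)` has nonzero discriminant, hence is an elliptic curve,
and its j-invariant equals `−q³(q³ − 216)³/(27 + q³)³`.
Here `4^(1/3)` is the real cube root of `4`. -/
theorem stmt_2 (q : ℂ) (hq : 27 + q ^ 3 ≠ 0) :
    let c : ℂ := ((4 : ℝ) ^ ((1 : ℝ) / 3) : ℝ)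
    let g₂ : ℂ := c / 3 * (q ^ 4 - 216 * q)
    let g₃ : ℂ := -(2 / 27) * q ^ 6 - 40 * q ^ 3 + 432
    let W : WeierstrassCurve ℂ :=
      { a₁ := 0, a₂ := 0, a₃ := 0, a₄ := -g₂ / 4, a₆ := -g₃ / 4 }
    W.Δ ≠ 0 ∧
      ∀ _ : W.IsElliptic, W.j = -q ^ 3 * (q ^ 3 - 216) ^ 3 / (27 + q ^ 3) ^ 3 := by
  intro c g₂ g₃ W
  have hc : c ^ 3 = 4 := by
    have : ((4 : ℝ) ^ ((1 : ℝ) / 3)) ^ 3 = 4 := by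
      rw [← Real.rpow_natCast ((4 : ℝ) ^ ((1 : ℝ) / 3)) 3, ← Real.rpow_mul (by norm_num)]
      norm_num
    simp only [c]
    rw [← Complex.ofReal_pow, this]
    norm_num
  have hΔ : W.Δ = -256 * (27 + q ^ 3) ^ 3 := by
    simp only [WeierstrassCurve.Δ, WeierstrassCurve.b₂, WeierstrassCurve.b₄,
      WeierstrassCurve.b₆, WeierstrassCurve.b₈, W, g₂, g₃]
    linear_combination ((q ^ 4 - 216 * q) ^ 3 / 27) * hc
  have hΔne : W.Δ ≠ 0 := by
    rw [hΔ]
    exact mul_ne_zero (by norm_num) (pow_ne_zero _ hq)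
  refine ⟨hΔne, fun h => ?_⟩
  have hc₄ : W.c₄ ^ 3 = 256 * q ^ 3 * (q ^ 3 - 216) ^ 3 := by
    simp only [WeierstrassCurve.c₄, WeierstrassCurve.b₂, WeierstrassCurve.b₄, W, g₂]
    linear_combination (64 * (q ^ 4 - 216 * q) ^ 3) * hc
  have hj : W.j = W.c₄ ^ 3 / W.Δ := by
    rw [WeierstrassCurve.j, Units.val_inv_eq_inv_val, WeierstrassCurve.coe_Δ',
      inv_mul_eq_div]
  rw [hj, hΔ, hc₄]
  field_simp
end

section
/- Let q ∈ ℂ with q ≠ 0 and 27 + q³ ≠ 0. Then the set of pairs (X,Y) ∈ ℂ² satisfying both X³ + Y³ + Y⁶ + q·X·Y³ = 0 and 1 + 2Y³ + q·X = 0 has exactly 9 elements. -/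
open Polynomial

/-- For `q ≠ 0` with `27 + q³ ≠ 0`, the system
`X³ + Y³ + Y⁶ + qXY³ = 0`, `1 + 2Y³ + qX = 0` has exactly `9` solutions
`(X, Y) ∈ ℂ²` (the nine ramification points). -/
theorem stmt_5 (q : ℂ) (hq : q ≠ 0) (hq' : 27 + q ^ 3 ≠ 0) :
    {p : ℂ × ℂ |
        p.1 ^ 3 + p.2 ^ 3 + p.2 ^ 6 + q * p.1 * p.2 ^ 3 = 0 ∧
          1 + 2 * p.2 ^ 3 + q * p.1 = 0}.ncard = 9 := by
  have hq3 : q ^ 3 ≠ 0 := pow_ne_zero _ hq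
  set P : ℂ[X] := C 8 * X ^ 9 + C (12 + q ^ 3) * X ^ 6 + C 6 * X ^ 3 + 1 with hP
  set D : ℂ[X] := C 24 * X ^ 6 + C (2 * (12 + q ^ 3)) * X ^ 3 + C 6 with hD
  have hdeg : P.natDegree = 9 := by
    rw [hP]; compute_degree!
  have hPne : P ≠ 0 := fun h => by simp [h] at hdeg
  have hder : derivative P = (C 3 * X ^ 2) * D := by
    rw [hP, hD]
    apply Polynomial.funext
    intro r
    simp [derivative_pow]
    ring
  -- coprimality with X
  have h1 : IsCoprime P (X : ℂ[X]) :=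
    ⟨1, -(C 8 * X ^ 8 + C (12 + q ^ 3) * X ^ 5 + C 6 * X ^ 2), by rw [hP]; ring⟩
  have h3 : IsCoprime P (C 3 : ℂ[X]) :=
    ⟨0, C (3⁻¹ : ℂ), by rw [← C_mul]; norm_num⟩
  -- coprimality with D via explicit Bezout identity
  have h2 : IsCoprime P D := by
    refine ⟨C ((2 * q ^ 3 * (27 + q ^ 3))⁻¹) *
        (C (2 * (q ^ 6 + 36 * q ^ 3 + 252)) + C (24 * (24 + q ^ 3)) * X ^ 3),
      C ((2 * q ^ 3 * (27 + q ^ 3))⁻¹) *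
        (C (-3 * (q ^ 3 + 28)) + C (-(q ^ 6 + 36 * q ^ 3 + 264)) * X ^ 3 +
          C (-8 * (24 + q ^ 3)) * X ^ 6), ?_⟩
    rw [hP, hD]
    apply Polynomial.funext
    intro r
    simp
    field_simp
    ring
  have hsep : P.Separable := by
    rw [Polynomial.Separable, hder]
    exact (h3.mul_right (h1.pow_right (n := 2))).mul_right h2
  have hcard : Fintype.card (P.rootSet ℂ) = 9 :=
    hdeg ▸ Polynomial.card_rootSet_eq_natDegree hsep (IsAlgClosed.splits _)
  have hinj : Function.Injective (fun y : ℂ => (-(1 + 2 * y ^ 3) / q, y)) := by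
    intro a b h
    exact congrArg Prod.snd h
  have hSet : {p : ℂ × ℂ |
        p.1 ^ 3 + p.2 ^ 3 + p.2 ^ 6 + q * p.1 * p.2 ^ 3 = 0 ∧
          1 + 2 * p.2 ^ 3 + q * p.1 = 0} =
      (fun y : ℂ => (-(1 + 2 * y ^ 3) / q, y)) '' (P.rootSet ℂ) := by
    ext ⟨x, y⟩
    simp only [Set.mem_setOf_eq, Set.mem_image, Polynomial.mem_rootSet, Prod.mk.injEq]
    constructor
    · rintro ⟨e1, e2⟩
      refine ⟨y, ⟨hPne, ?_⟩, ?_, rfl⟩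
      · rw [hP]
        simp
        linear_combination -(q ^ 3) * e1 +
          (q ^ 2 * x ^ 2 - q * x * (1 + 2 * y ^ 3) + (1 + 2 * y ^ 3) ^ 2 + q ^ 3 * y ^ 3) * e2
      · field_simp
        linear_combination -e2
    · rintro ⟨y', ⟨-, hr⟩, hx, rfl⟩
      rw [hP] at hr
      simp at hr
      subst hx
      constructor
      · field_simp
        linear_combination -hr
      · field_simp
        ring
  rw [hSet, Set.ncard_image_of_injective _ hinj, ← Nat.card_coe_set_eq,
    Nat.card_eq_fintype_card, hcard]
end

section
/- Let q ∈ ℂ satisfy 27 + q³ ≠ 0 and q¹²/864 + q⁹/12 + 2q⁶ + 17q³ + 27 ≠ 0. Then every (X,Y) ∈ ℂ² with X³ + Y³ + Y⁶ + q·X·Y³ = 0 and 1 + 2Y³ + q·X = 0 satisfies −12X² + 2q²X + 2q ≠ 0. -/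
/-- If `27 + q³ ≠ 0` and `q¹²/864 + q⁹/12 + 2q⁶ + 17q³ + 27 ≠ 0`,
then at every ramification point `(X, Y)` (i.e. every common solution of
`X³ + Y³ + Y⁶ + qXY³ = 0` and `1 + 2Y³ + qX = 0`) one has
`−12X² + 2q²X + 2q ≠ 0`. -/
theorem stmt_7 (q : ℂ) (h1 : 27 + q ^ 3 ≠ 0)
    (h2 : q ^ 12 / 864 + q ^ 9 / 12 + 2 * q ^ 6 + 17 * q ^ 3 + 27 ≠ 0) :
    ∀ X Y : ℂ,
      X ^ 3 + Y ^ 3 + Y ^ 6 + q * X * Y ^ 3 = 0 →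
      1 + 2 * Y ^ 3 + q * X = 0 →
      -12 * X ^ 2 + 2 * q ^ 2 * X + 2 * q ≠ 0 := by
  intro X Y hH hY hc
  -- Eliminate Y : 4X³ = (1 + qX)²
  have hA : 4 * X ^ 3 = (1 + q * X) ^ 2 := by
    linear_combination 4 * hH - (1 + 2 * Y ^ 3 + q * X) * hY
  -- Rewrite the coefficient condition
  have hB : 6 * X ^ 2 = q ^ 2 * X + q := by linear_combination (-1/2) * hc
  -- X ≠ 0
  have hX0 : X ≠ 0 := by
    intro h
    subst h
    have : (4 : ℂ) * 0 ^ 3 = (1 + q * 0) ^ 2 := hA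
    simp at this
  have h4 : 4 * X ^ 3 * (9 * X - q ^ 2) = 0 := by
    linear_combination (-q ^ 2) * hA + (6 * X ^ 2 + q ^ 2 * X + q) * hB
  have h9 : 9 * X = q ^ 2 := by
    rcases mul_eq_zero.mp h4 with h | h
    · exact absurd (by
        rcases mul_eq_zero.mp h with h' | h'
        · norm_num at h'
        · exact pow_eq_zero_iff (by norm_num) |>.mp h') hX0
    · linear_combination h
  have hq : q = -3 * X ^ 2 := by linear_combination X * h9 - hB
  have h5 : X * (X ^ 3 - 1) = 0 := by
    linear_combination (-1/9) * h9 - ((q - 3 * X ^ 2) / 9) * hq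
  have hX3 : X ^ 3 = 1 := by
    rcases mul_eq_zero.mp h5 with h | h
    · exact absurd h hX0
    · linear_combination h
  exact h1 (by linear_combination (q ^ 2 - 3 * q * X ^ 2 + 9 * X ^ 4) * hq
    - 27 * (X ^ 3 + 1) * hX3)
end
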